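/- Let m, n be positive integers, C ∈ ℝ^{m×n}, ε > 0, and K_{ij} = exp(-C_{ij}/ε). Let a ∈ ℝ^m have strictly positive entries, let b^d, b^u ∈ ℝ^n satisfy 0 ≤ b^d ≤ b^u entrywise, and suppose C(a,b^u,b^d) is nonempty. Then the minimizer P* of ⟨C,P⟩ - εH(P) over C(a,b^u,b^d) exists and is unique, and there exist vectors u ∈ ℝ^m with u > 0, q ∈ ℝ^n with q ≥ 1_n entrywise, and v ∈ ℝ^n with 0 ≤ v ≤ 1_n entrywise, such that P* = diag(u)·K·diag(q⊙v), i.e. P*_{ij} = u_i·K_{ij}·q_j·v_j for all i, j. -/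

import Mathlib

open Real

noncomputable def gg (x : ℝ) : ℝ := x * (Real.log x - 1)

lemma gg_zero : gg 0 = 0 := by simp [gg]

lemma gg_up {y t : ℝ} (hy : 0 ≤ y) (ht : 0 < t) (ht1 : t ≤ 1) :
    gg (y + t) - gg y ≤ t * (1 + Real.log (y + 1)) := by
  have hly : 0 ≤ Real.log (y + 1) := Real.log_nonneg (by linarith)
  rcases eq_or_lt_of_le hy with rfl | hy'
  · simp only [zero_add, gg_zero, sub_zero, gg, Real.log_one]
    have h0 : t * Real.log t ≤ 0 :=
      mul_nonpos_iff.2 (Or.inl ⟨ht.le, Real.log_nonpos ht.le ht1⟩)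
    nlinarith
  · have h1 : Real.log (y + t) - Real.log y ≤ t / y := by
      have := Real.log_le_sub_one_of_pos (show 0 < (y + t) / y by positivity)
      rw [Real.log_div (by linarith) (by linarith)] at this
      have : Real.log (y + t) - Real.log y ≤ (y + t) / y - 1 := this
      calc Real.log (y + t) - Real.log y ≤ (y + t) / y - 1 := this
        _ = t / y := by field_simp; ring
    have h2 : Real.log (y + t) ≤ Real.log (y + 1) :=
      Real.log_le_log (by linarith) (by linarith)
    have key : (y + t) * Real.log (y + t) - y * Real.log y ≤ t + t * Real.log (y + 1) := by
      have e1 : y * (Real.log (y + t) - Real.log y) ≤ t := by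
        calc y * (Real.log (y + t) - Real.log y) ≤ y * (t / y) := by
              apply mul_le_mul_of_nonneg_left h1 hy
          _ = t := by field_simp
      nlinarith
    simp only [gg]
    nlinarith

lemma gg_down {x t : ℝ} (ht : 0 < t) (htx : t < x) :
    gg (x - t) - gg x ≤ t * (1 - Real.log x) := by
  have hx : 0 < x := lt_trans ht htx
  have h1 : Real.log (x - t) ≤ Real.log x := Real.log_le_log (by linarith) (by linarith)
  have h2 : (x - t) * Real.log (x - t) ≤ (x - t) * Real.log x :=
    mul_le_mul_of_nonneg_left h1 (by linarith)
  simp only [gg]; nlinarith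

lemma gg_deriv {x : ℝ} (hx : 0 < x) : HasDerivAt gg (Real.log x) x := by
  have h : HasDerivAt (fun x : ℝ => x * Real.log x - x) (Real.log x + 1 - 1) x :=
    (Real.hasDerivAt_mul_log hx.ne').sub (hasDerivAt_id x)
  have he : (fun x : ℝ => x * Real.log x - x) = gg := by
    funext z; simp [gg]; ring
  rw [he] at h
  simpa using h

lemma gg_cont : Continuous gg := by
  have he : gg = fun x : ℝ => x * Real.log x - x := by funext z; simp [gg]; ring
  rw [he]; exact Real.continuous_mul_log.sub continuous_id

lemma gg_mid_le {x y : ℝ} (hx : 0 ≤ x) (hy : 0 ≤ y) :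
    gg ((x + y) / 2) ≤ (gg x + gg y) / 2 := by
  have h := Real.strictConvexOn_mul_log.convexOn.2 (Set.mem_Ici.2 hx) (Set.mem_Ici.2 hy)
    (by norm_num : (0:ℝ) ≤ 1/2) (by norm_num : (0:ℝ) ≤ 1/2) (by norm_num)
  simp only [smul_eq_mul] at h
  have e : (1/2 : ℝ) * x + (1/2) * y = (x + y)/2 := by ring
  rw [e] at h
  simp only [gg]; nlinarith

lemma gg_mid_lt {x y : ℝ} (hx : 0 ≤ x) (hy : 0 ≤ y) (hxy : x ≠ y) :
    gg ((x + y) / 2) < (gg x + gg y) / 2 := by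
  have h := Real.strictConvexOn_mul_log.2 (Set.mem_Ici.2 hx) (Set.mem_Ici.2 hy) hxy
    (by norm_num : (0:ℝ) < 1/2) (by norm_num : (0:ℝ) < 1/2) (by norm_num)
  simp only [smul_eq_mul] at h
  have e : (1/2 : ℝ) * x + (1/2) * y = (x + y)/2 := by ring
  rw [e] at h
  simp only [gg]; nlinarith

noncomputable def ff (m n : ℕ) (C : Matrix (Fin m) (Fin n) ℝ) (ε : ℝ)
    (P : Matrix (Fin m) (Fin n) ℝ) : ℝ :=
  ∑ i, ∑ j, (C i j * P i j + ε * gg (P i j))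

lemma ff_eq (m n : ℕ) (C : Matrix (Fin m) (Fin n) ℝ) (ε : ℝ) :
    (fun P : Matrix (Fin m) (Fin n) ℝ =>
      (∑ i, ∑ j, C i j * P i j) -
        ε * (-(∑ i, ∑ j, P i j * (Real.log (P i j) - 1)))) = ff m n C ε := by
  funext P
  simp only [ff, gg, mul_neg, sub_neg_eq_add, Finset.sum_add_distrib, Finset.mul_sum]

noncomputable def pert (m n : ℕ) (i1 i2 : Fin m) (j1 j2 : Fin n) (t : ℝ)
    (P : Matrix (Fin m) (Fin n) ℝ) : Matrix (Fin m) (Fin n) ℝ :=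
  fun i j => P i j + t * (((if i = i1 then (1:ℝ) else 0) - if i = i2 then 1 else 0) *
    ((if j = j1 then (1:ℝ) else 0) - if j = j2 then 1 else 0))

lemma pert_row (m n : ℕ) (i1 i2 : Fin m) (j1 j2 : Fin n) (t : ℝ)
    (P : Matrix (Fin m) (Fin n) ℝ) (i : Fin m) :
    ∑ j, pert m n i1 i2 j1 j2 t P i j = ∑ j, P i j := by
  simp [pert, Finset.sum_add_distrib, ← Finset.mul_sum, Finset.sum_sub_distrib]

lemma pert_col (m n : ℕ) (i1 i2 : Fin m) (j1 j2 : Fin n) (t : ℝ)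
    (P : Matrix (Fin m) (Fin n) ℝ) (j : Fin n) :
    ∑ i, pert m n i1 i2 j1 j2 t P i j = ∑ i, P i j := by
  simp [pert, Finset.sum_add_distrib, ← Finset.sum_mul, Finset.sum_sub_distrib,
    mul_comm, ← Finset.mul_sum]

lemma pert_diff (m n : ℕ) (C : Matrix (Fin m) (Fin n) ℝ) (ε : ℝ)
    (i1 i2 : Fin m) (j1 j2 : Fin n) (hii : i1 ≠ i2) (hjj : j1 ≠ j2) (t : ℝ)
    (P : Matrix (Fin m) (Fin n) ℝ) :
    ff m n C ε (pert m n i1 i2 j1 j2 t P) - ff m n C ε P =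
      t * (C i1 j1 - C i1 j2 - C i2 j1 + C i2 j2) +
      ε * ((gg (P i1 j1 + t) - gg (P i1 j1)) + (gg (P i2 j2 + t) - gg (P i2 j2)) +
           (gg (P i1 j2 - t) - gg (P i1 j2)) + (gg (P i2 j1 - t) - gg (P i2 j1))) := by
  simp only [ff, ← Finset.sum_sub_distrib]
  rw [Finset.sum_eq_add (s := Finset.univ) i1 i2 hii ?_ (by simp) (by simp)]
  · rw [Finset.sum_eq_add (s := Finset.univ) j1 j2 hjj ?_ (by simp) (by simp),
        Finset.sum_eq_add (s := Finset.univ) j1 j2 hjj ?_ (by simp) (by simp)]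
    · have e11 : pert m n i1 i2 j1 j2 t P i1 j1 = P i1 j1 + t := by
        simp [pert, hii, hjj]
      have e12 : pert m n i1 i2 j1 j2 t P i1 j2 = P i1 j2 - t := by
        simp [pert, hii, Ne.symm hjj]; ring
      have e21 : pert m n i1 i2 j1 j2 t P i2 j1 = P i2 j1 - t := by
        simp [pert, Ne.symm hii, hjj]; ring
      have e22 : pert m n i1 i2 j1 j2 t P i2 j2 = P i2 j2 + t := by
        simp [pert, Ne.symm hii, Ne.symm hjj]
      rw [e11, e12, e21, e22]; ring
    · intro j _ ⟨h1, h2⟩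
      simp [pert, if_neg h1, if_neg h2]
    · intro j _ ⟨h1, h2⟩
      simp [pert, if_neg h1, if_neg h2]
  · intro i _ ⟨h1, h2⟩
    have : ∀ j, pert m n i1 i2 j1 j2 t P i j = P i j := by
      intro j; simp [pert, if_neg h1, if_neg h2]
    simp [this]

lemma pert_11 (m n : ℕ) {i1 i2 : Fin m} {j1 j2 : Fin n} (t : ℝ)
    (P : Matrix (Fin m) (Fin n) ℝ) (hii : i1 ≠ i2) (hjj : j1 ≠ j2) :
    pert m n i1 i2 j1 j2 t P i1 j1 = P i1 j1 + t := by simp [pert, hii, hjj]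

lemma pert_12 (m n : ℕ) {i1 i2 : Fin m} {j1 j2 : Fin n} (t : ℝ)
    (P : Matrix (Fin m) (Fin n) ℝ) (hii : i1 ≠ i2) (hjj : j1 ≠ j2) :
    pert m n i1 i2 j1 j2 t P i1 j2 = P i1 j2 - t := by
  simp [pert, hii, Ne.symm hjj]; ring

lemma pert_21 (m n : ℕ) {i1 i2 : Fin m} {j1 j2 : Fin n} (t : ℝ)
    (P : Matrix (Fin m) (Fin n) ℝ) (hii : i1 ≠ i2) (hjj : j1 ≠ j2) :
    pert m n i1 i2 j1 j2 t P i2 j1 = P i2 j1 - t := by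
  simp [pert, Ne.symm hii, hjj]; ring

lemma pert_22 (m n : ℕ) {i1 i2 : Fin m} {j1 j2 : Fin n} (t : ℝ)
    (P : Matrix (Fin m) (Fin n) ℝ) (hii : i1 ≠ i2) (hjj : j1 ≠ j2) :
    pert m n i1 i2 j1 j2 t P i2 j2 = P i2 j2 + t := by
  simp [pert, Ne.symm hii, Ne.symm hjj]

lemma pert_nonneg (m n : ℕ) {i1 i2 : Fin m} {j1 j2 : Fin n} {t : ℝ}
    (P : Matrix (Fin m) (Fin n) ℝ) (hii : i1 ≠ i2) (hjj : j1 ≠ j2)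
    (hP : ∀ i j, 0 ≤ P i j)
    (h11 : 0 ≤ P i1 j1 + t) (h22 : 0 ≤ P i2 j2 + t)
    (h12 : t ≤ P i1 j2) (h21 : t ≤ P i2 j1) :
    ∀ i j, 0 ≤ pert m n i1 i2 j1 j2 t P i j := by
  intro i j
  rcases eq_or_ne i i1 with rfl | hi1
  · rcases eq_or_ne j j1 with rfl | hj1
    · rw [pert_11 m n t P hii hjj]; exact h11
    · rcases eq_or_ne j j2 with rfl | hj2
      · rw [pert_12 m n t P hii hjj]; linarith
      · simpa [pert, hj1, hj2] using hP _ _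
  · rcases eq_or_ne i i2 with rfl | hi2
    · rcases eq_or_ne j j1 with rfl | hj1
      · rw [pert_21 m n t P hii hjj]; linarith
      · rcases eq_or_ne j j2 with rfl | hj2
        · rw [pert_22 m n t P hii hjj]; exact h22
        · simpa [pert, hj1, hj2] using hP _ _
    · simpa [pert, hi1, hi2] using hP _ _

lemma pert_mem (m n : ℕ) {i1 i2 : Fin m} {j1 j2 : Fin n} {t : ℝ}
    {P : Matrix (Fin m) (Fin n) ℝ}
    (a : Fin m → ℝ) (bd bu : Fin n → ℝ)
    (S : Set (Matrix (Fin m) (Fin n) ℝ))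
    (hS : S = {P | (∀ i j, 0 ≤ P i j) ∧ (∀ i, ∑ j, P i j = a i) ∧
            (∀ j, bd j ≤ ∑ i, P i j) ∧ (∀ j, ∑ i, P i j ≤ bu j)})
    (hP : P ∈ S)
    (hnn : ∀ i j, 0 ≤ pert m n i1 i2 j1 j2 t P i j) :
    pert m n i1 i2 j1 j2 t P ∈ S := by
  subst hS
  obtain ⟨h0, h1, h2, h3⟩ := hP
  refine ⟨hnn, fun i => ?_, fun j => ?_, fun j => ?_⟩
  · rw [pert_row]; exact h1 i
  · rw [pert_col]; exact h2 j
  · rw [pert_col]; exact h3 j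

lemma min_col_pos (m n : ℕ) (C : Matrix (Fin m) (Fin n) ℝ) (ε : ℝ) (hε : 0 < ε)
    (a : Fin m → ℝ) (ha : ∀ i, 0 < a i) (bd bu : Fin n → ℝ)
    (S : Set (Matrix (Fin m) (Fin n) ℝ))
    (hS : S = {P | (∀ i j, 0 ≤ P i j) ∧ (∀ i, ∑ j, P i j = a i) ∧
            (∀ j, bd j ≤ ∑ i, P i j) ∧ (∀ j, ∑ i, P i j ≤ bu j)})
    (P : Matrix (Fin m) (Fin n) ℝ) (hP : P ∈ S)
    (hmin : IsMinOn (ff m n C ε) S P)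
    (i1 i2 : Fin m) (j1 : Fin n) (h2 : 0 < P i2 j1) : 0 < P i1 j1 := by
  obtain ⟨hnn, hrow, -, -⟩ : _ := hS ▸ hP
  by_contra hcon
  have h11 : P i1 j1 = 0 := le_antisymm (not_lt.1 hcon) (hnn i1 j1)
  have hii : i1 ≠ i2 := by rintro rfl; rw [h11] at h2; exact lt_irrefl _ h2
  obtain ⟨j2, hj2⟩ : ∃ j, 0 < P i1 j := by
    by_contra hc; push_neg at hc
    have hz : ∑ j, P i1 j = 0 :=
      le_antisymm (Finset.sum_nonpos fun j _ => hc j)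
        (Finset.sum_nonneg fun j _ => hnn i1 j)
    rw [hrow i1] at hz; exact (ha i1).ne' hz
  have hjj : j1 ≠ j2 := by rintro rfl; rw [h11] at hj2; exact lt_irrefl _ hj2
  set cC := C i1 j1 - C i1 j2 - C i2 j1 + C i2 j2 with hcC
  set M := cC + ε * (2 + Real.log (P i2 j2 + 1) - Real.log (P i1 j2) - Real.log (P i2 j1))
    with hM
  set t := min (min (P i2 j1 / 2) (P i1 j2 / 2)) (min 1 (Real.exp (-(M + 1) / ε)))
    with htdef
  have ht0 : 0 < t :=
    lt_min (lt_min (by linarith) (by linarith)) (lt_min one_pos (Real.exp_pos _))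
  have ht21 : t < P i2 j1 :=
    lt_of_le_of_lt (le_trans (min_le_left _ _) (min_le_left _ _)) (by linarith)
  have ht12 : t < P i1 j2 :=
    lt_of_le_of_lt (le_trans (min_le_left _ _) (min_le_right _ _)) (by linarith)
  have ht1 : t ≤ 1 := le_trans (min_le_right _ _) (min_le_left _ _)
  have htlog : Real.log t ≤ -(M + 1) / ε := by
    have hle : t ≤ Real.exp (-(M + 1) / ε) := le_trans (min_le_right _ _) (min_le_right _ _)
    calc Real.log t ≤ Real.log (Real.exp (-(M + 1) / ε)) := Real.log_le_log ht0 hle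
      _ = -(M + 1) / ε := Real.log_exp _
  have hQS : pert m n i1 i2 j1 j2 t P ∈ S := by
    refine pert_mem m n a bd bu S hS hP ?_
    exact pert_nonneg m n P hii hjj hnn (by rw [h11]; linarith)
      (by have := hnn i2 j2; linarith) ht12.le ht21.le
  have hle : ff m n C ε P ≤ ff m n C ε (pert m n i1 i2 j1 j2 t P) := hmin hQS
  have hdiff := pert_diff m n C ε i1 i2 j1 j2 hii hjj t P
  have b11 : gg (P i1 j1 + t) - gg (P i1 j1) = t * Real.log t - t := by
    rw [h11, gg_zero]; simp [gg]; ring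
  have b22 : gg (P i2 j2 + t) - gg (P i2 j2) ≤ t * (1 + Real.log (P i2 j2 + 1)) :=
    gg_up (hnn i2 j2) ht0 ht1
  have b12 : gg (P i1 j2 - t) - gg (P i1 j2) ≤ t * (1 - Real.log (P i1 j2)) :=
    gg_down ht0 ht12
  have b21 : gg (P i2 j1 - t) - gg (P i2 j1) ≤ t * (1 - Real.log (P i2 j1)) :=
    gg_down ht0 ht21
  have hεlog : ε * Real.log t ≤ -(M + 1) := by
    have h2' := mul_le_mul_of_nonneg_left htlog hε.le
    have h3 : ε * (-(M + 1) / ε) = -(M + 1) := by field_simp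
    linarith [h3 ▸ h2']
  have h4 : t * (ε * Real.log t) ≤ t * (-(M + 1)) := mul_le_mul_of_nonneg_left hεlog ht0.le
  have hsum : (gg (P i1 j1 + t) - gg (P i1 j1)) + (gg (P i2 j2 + t) - gg (P i2 j2)) +
      (gg (P i1 j2 - t) - gg (P i1 j2)) + (gg (P i2 j1 - t) - gg (P i2 j1)) ≤
      t * Real.log t - t + t * (1 + Real.log (P i2 j2 + 1)) +
      t * (1 - Real.log (P i1 j2)) + t * (1 - Real.log (P i2 j1)) := by linarith
  have hmul := mul_le_mul_of_nonneg_left hsum hε.le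
  have hring : ε * (t * Real.log t - t + t * (1 + Real.log (P i2 j2 + 1)) +
      t * (1 - Real.log (P i1 j2)) + t * (1 - Real.log (P i2 j1))) =
      t * (M - cC) + t * (ε * Real.log t) := by rw [hM]; ring
  have hmul2 : ε * ((gg (P i1 j1 + t) - gg (P i1 j1)) + (gg (P i2 j2 + t) - gg (P i2 j2)) +
      (gg (P i1 j2 - t) - gg (P i1 j2)) + (gg (P i2 j1 - t) - gg (P i2 j1))) ≤
      t * (M - cC) + t * (ε * Real.log t) := hring ▸ hmul
  have final : ff m n C ε (pert m n i1 i2 j1 j2 t P) - ff m n C ε P ≤ -t := by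
    rw [hdiff, ← hcC]
    calc t * cC + ε * ((gg (P i1 j1 + t) - gg (P i1 j1)) + (gg (P i2 j2 + t) - gg (P i2 j2)) +
          (gg (P i1 j2 - t) - gg (P i1 j2)) + (gg (P i2 j1 - t) - gg (P i2 j1)))
        ≤ t * cC + (t * (M - cC) + t * (ε * Real.log t)) := by linarith
      _ ≤ t * cC + (t * (M - cC) + t * (-(M + 1))) := by linarith
      _ = -t := by ring
  linarith

lemma min_cycle (m n : ℕ) (C : Matrix (Fin m) (Fin n) ℝ) (ε : ℝ) (hε : 0 < ε)
    (a : Fin m → ℝ) (bd bu : Fin n → ℝ)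
    (S : Set (Matrix (Fin m) (Fin n) ℝ))
    (hS : S = {P | (∀ i j, 0 ≤ P i j) ∧ (∀ i, ∑ j, P i j = a i) ∧
            (∀ j, bd j ≤ ∑ i, P i j) ∧ (∀ j, ∑ i, P i j ≤ bu j)})
    (P : Matrix (Fin m) (Fin n) ℝ) (hP : P ∈ S)
    (hmin : IsMinOn (ff m n C ε) S P)
    (i1 i2 : Fin m) (j1 j2 : Fin n)
    (p11 : 0 < P i1 j1) (p12 : 0 < P i1 j2) (p21 : 0 < P i2 j1) (p22 : 0 < P i2 j2) :
    C i1 j1 + C i2 j2 + ε * (Real.log (P i1 j1) + Real.log (P i2 j2)) =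
    C i1 j2 + C i2 j1 + ε * (Real.log (P i1 j2) + Real.log (P i2 j1)) := by
  rcases eq_or_ne i1 i2 with rfl | hii
  · ring
  rcases eq_or_ne j1 j2 with rfl | hjj
  · ring
  obtain ⟨hnn, -, -, -⟩ : _ := hS ▸ hP
  set r := min (min (P i1 j1) (P i2 j2)) (min (P i1 j2) (P i2 j1)) with hrdef
  have hr : 0 < r := lt_min (lt_min p11 p22) (lt_min p12 p21)
  have hr11 : r ≤ P i1 j1 := le_trans (min_le_left _ _) (min_le_left _ _)
  have hr22 : r ≤ P i2 j2 := le_trans (min_le_left _ _) (min_le_right _ _)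
  have hr12 : r ≤ P i1 j2 := le_trans (min_le_right _ _) (min_le_left _ _)
  have hr21 : r ≤ P i2 j1 := le_trans (min_le_right _ _) (min_le_right _ _)
  set ψ : ℝ → ℝ := fun t => t * (C i1 j1 - C i1 j2 - C i2 j1 + C i2 j2) +
      ε * (gg (P i1 j1 + t) + gg (P i2 j2 + t) + gg (P i1 j2 - t) + gg (P i2 j1 - t))
    with hψ
  have hloc : IsLocalMin ψ 0 := by
    have key : ∀ t : ℝ, |t| < r → ψ 0 ≤ ψ t := by
      intro t ht
      obtain ⟨hta, htb⟩ := abs_lt.1 ht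
      have hQS : pert m n i1 i2 j1 j2 t P ∈ S := by
        refine pert_mem m n a bd bu S hS hP ?_
        exact pert_nonneg m n P hii hjj hnn (by linarith) (by linarith)
          (by linarith) (by linarith)
      have hmin' : ff m n C ε P ≤ ff m n C ε (pert m n i1 i2 j1 j2 t P) := hmin hQS
      have hd := pert_diff m n C ε i1 i2 j1 j2 hii hjj t P
      have hdiff2 : ψ t - ψ 0 =
          ff m n C ε (pert m n i1 i2 j1 j2 t P) - ff m n C ε P := by
        rw [hd, hψ]; simp only []; ring
      linarith
    have : ∀ᶠ t in nhds (0:ℝ), ψ 0 ≤ ψ t := by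
      rw [Metric.eventually_nhds_iff]
      exact ⟨r, hr, fun {t} ht => key t (by simpa [Real.dist_eq] using ht)⟩
    exact this
  have h1 : HasDerivAt (fun t : ℝ => gg (P i1 j1 + t)) (Real.log (P i1 j1)) 0 := by
    have hf : HasDerivAt (fun t : ℝ => P i1 j1 + t) 1 0 := (hasDerivAt_id 0).const_add _
    have := (gg_deriv (x := P i1 j1 + 0) (by simpa using p11)).comp 0 hf
    simpa [Function.comp_def] using this
  have h2 : HasDerivAt (fun t : ℝ => gg (P i2 j2 + t)) (Real.log (P i2 j2)) 0 := by
    have hf : HasDerivAt (fun t : ℝ => P i2 j2 + t) 1 0 := (hasDerivAt_id 0).const_add _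
    have := (gg_deriv (x := P i2 j2 + 0) (by simpa using p22)).comp 0 hf
    simpa [Function.comp_def] using this
  have h3 : HasDerivAt (fun t : ℝ => gg (P i1 j2 - t)) (-Real.log (P i1 j2)) 0 := by
    have hf : HasDerivAt (fun t : ℝ => P i1 j2 - t) (-1) 0 := by
      simpa using (hasDerivAt_id 0).const_sub (P i1 j2)
    have := (gg_deriv (x := P i1 j2 - 0) (by simpa using p12)).comp 0 hf
    simpa [Function.comp_def] using this
  have h4 : HasDerivAt (fun t : ℝ => gg (P i2 j1 - t)) (-Real.log (P i2 j1)) 0 := by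
    have hf : HasDerivAt (fun t : ℝ => P i2 j1 - t) (-1) 0 := by
      simpa using (hasDerivAt_id 0).const_sub (P i2 j1)
    have := (gg_deriv (x := P i2 j1 - 0) (by simpa using p21)).comp 0 hf
    simpa [Function.comp_def] using this
  have hder : HasDerivAt ψ ((C i1 j1 - C i1 j2 - C i2 j1 + C i2 j2) +
      ε * (Real.log (P i1 j1) + Real.log (P i2 j2) + -Real.log (P i1 j2) +
        -Real.log (P i2 j1))) 0 := by
    rw [hψ]
    exact (hasDerivAt_mul_const _).add ((((h1.add h2).add h3).add h4).const_mul ε)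
  have hzero := hloc.hasDerivAt_eq_zero hder
  linear_combination hzero

lemma exists_min (m n : ℕ) (C : Matrix (Fin m) (Fin n) ℝ) (ε : ℝ)
    (a : Fin m → ℝ) (bd bu : Fin n → ℝ)
    (S : Set (Matrix (Fin m) (Fin n) ℝ))
    (hS : S = {P | (∀ i j, 0 ≤ P i j) ∧ (∀ i, ∑ j, P i j = a i) ∧
            (∀ j, bd j ≤ ∑ i, P i j) ∧ (∀ j, ∑ i, P i j ≤ bu j)})
    (hne : S.Nonempty) :
    ∃ P ∈ S, IsMinOn (ff m n C ε) S P := by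
  have hc : ∀ (i : Fin m) (j : Fin n),
      Continuous fun P : Matrix (Fin m) (Fin n) ℝ => P i j :=
    fun i j => (continuous_apply j).comp (continuous_apply i)
  have hclosed : IsClosed S := by
    rw [hS]
    have e : {P : Matrix (Fin m) (Fin n) ℝ | (∀ i j, 0 ≤ P i j) ∧
        (∀ i, ∑ j, P i j = a i) ∧ (∀ j, bd j ≤ ∑ i, P i j) ∧
        (∀ j, ∑ i, P i j ≤ bu j)} =
        (⋂ i, ⋂ j, {P : Matrix (Fin m) (Fin n) ℝ | 0 ≤ P i j}) ∩
        ((⋂ i, {P : Matrix (Fin m) (Fin n) ℝ | ∑ j, P i j = a i}) ∩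
        ((⋂ j, {P : Matrix (Fin m) (Fin n) ℝ | bd j ≤ ∑ i, P i j}) ∩
        (⋂ j, {P : Matrix (Fin m) (Fin n) ℝ | ∑ i, P i j ≤ bu j}))) := by
      ext P; simp [Set.mem_iInter]
    rw [e]
    refine IsClosed.inter ?_ (IsClosed.inter ?_ (IsClosed.inter ?_ ?_))
    · exact isClosed_iInter fun i => isClosed_iInter fun j =>
        isClosed_le continuous_const (hc i j)
    · exact isClosed_iInter fun i =>
        isClosed_eq (continuous_finset_sum _ fun j _ => hc i j) continuous_const
    · exact isClosed_iInter fun j =>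
        isClosed_le continuous_const (continuous_finset_sum _ fun i _ => hc i j)
    · exact isClosed_iInter fun j =>
        isClosed_le (continuous_finset_sum _ fun i _ => hc i j) continuous_const
  have hsub : S ⊆ (Set.pi Set.univ (fun i => Set.pi Set.univ
      fun _ : Fin n => Set.Icc (0:ℝ) (a i)) : Set (Matrix (Fin m) (Fin n) ℝ)) := by
    rw [hS]; rintro P ⟨h0, h1, -, -⟩
    refine Set.mem_univ_pi.2 ?_; intro i
    rw [Set.mem_univ_pi]; intro j
    refine ⟨h0 i j, ?_⟩
    calc P i j ≤ ∑ j', P i j' :=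
          Finset.single_le_sum (fun j' _ => h0 i j') (Finset.mem_univ j)
      _ = a i := h1 i
  have hcomp : IsCompact S :=
    IsCompact.of_isClosed_subset
      (isCompact_univ_pi fun i => isCompact_univ_pi fun _ => isCompact_Icc) hclosed hsub
  have hcont : Continuous (ff m n C ε) := by
    apply continuous_finset_sum; intro i _; apply continuous_finset_sum; intro j _
    exact (continuous_const.mul (hc i j)).add
      (continuous_const.mul (gg_cont.comp (hc i j)))
  exact hcomp.exists_isMinOn hne hcont.continuousOn

lemma min_unique (m n : ℕ) (C : Matrix (Fin m) (Fin n) ℝ) (ε : ℝ) (hε : 0 < ε)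
    (a : Fin m → ℝ) (bd bu : Fin n → ℝ)
    (S : Set (Matrix (Fin m) (Fin n) ℝ))
    (hS : S = {P | (∀ i j, 0 ≤ P i j) ∧ (∀ i, ∑ j, P i j = a i) ∧
            (∀ j, bd j ≤ ∑ i, P i j) ∧ (∀ j, ∑ i, P i j ≤ bu j)})
    (P Q : Matrix (Fin m) (Fin n) ℝ) (hP : P ∈ S) (hQ : Q ∈ S)
    (hminP : IsMinOn (ff m n C ε) S P) (hminQ : IsMinOn (ff m n C ε) S Q) :
    P = Q := by
  by_contra hne
  obtain ⟨hnnP, hrP, hlP, huP⟩ : _ := hS ▸ hP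
  obtain ⟨hnnQ, hrQ, hlQ, huQ⟩ : _ := hS ▸ hQ
  obtain ⟨i0, j0, hij⟩ : ∃ i j, P i j ≠ Q i j := by
    by_contra hc; push_neg at hc
    exact hne (by funext i j; exact hc i j)
  set R : Matrix (Fin m) (Fin n) ℝ := fun i j => (P i j + Q i j) / 2 with hR
  have hRapp : ∀ i j, R i j = (P i j + Q i j) / 2 := fun i j => rfl
  have hRS : R ∈ S := by
    rw [hS]
    refine ⟨fun i j => ?_, fun i => ?_, fun j => ?_, fun j => ?_⟩
    · simp only [hR]; have := hnnP i j; have := hnnQ i j; positivity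
    · simp only [hR]
      rw [← Finset.sum_div, Finset.sum_add_distrib, hrP, hrQ]; ring
    · simp only [hR]
      rw [← Finset.sum_div, Finset.sum_add_distrib]
      have := hlP j; have := hlQ j; linarith
    · simp only [hR]
      rw [← Finset.sum_div, Finset.sum_add_distrib]
      have := huP j; have := huQ j; linarith
  have entry_le : ∀ i j, C i j * R i j + ε * gg (R i j) ≤
      ((C i j * P i j + ε * gg (P i j)) + (C i j * Q i j + ε * gg (Q i j))) / 2 := by
    intro i j
    have h := mul_le_mul_of_nonneg_left (gg_mid_le (hnnP i j) (hnnQ i j)) hε.le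
    simp only [hR]; linarith
  have entry_lt : C i0 j0 * R i0 j0 + ε * gg (R i0 j0) <
      ((C i0 j0 * P i0 j0 + ε * gg (P i0 j0)) +
        (C i0 j0 * Q i0 j0 + ε * gg (Q i0 j0))) / 2 := by
    have h := mul_lt_mul_of_pos_left (gg_mid_lt (hnnP i0 j0) (hnnQ i0 j0) hij) hε
    simp only [hR]; linarith
  have outer : ff m n C ε R < ∑ i, ∑ j,
      (((C i j * P i j + ε * gg (P i j)) + (C i j * Q i j + ε * gg (Q i j))) / 2) := by
    refine Finset.sum_lt_sum (fun i _ => Finset.sum_le_sum fun j _ => entry_le i j)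
      ⟨i0, Finset.mem_univ i0, ?_⟩
    exact Finset.sum_lt_sum (fun j _ => entry_le i0 j)
      ⟨j0, Finset.mem_univ j0, entry_lt⟩
  have rhs_eq : (∑ i, ∑ j,
      (((C i j * P i j + ε * gg (P i j)) + (C i j * Q i j + ε * gg (Q i j))) / 2)) =
      (ff m n C ε P + ff m n C ε Q) / 2 := by
    simp only [ff, add_div, Finset.sum_add_distrib, ← Finset.sum_div]
  have h1 : ff m n C ε P ≤ ff m n C ε Q := hminP hQ
  have h2 : ff m n C ε Q ≤ ff m n C ε P := hminQ hP
  have h3 : ff m n C ε P ≤ ff m n C ε R := hminP hRS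
  linarith


theorem dbot_solution_property
    (m n : ℕ) (hm : 0 < m) (hn : 0 < n)
    (C : Matrix (Fin m) (Fin n) ℝ) (ε : ℝ) (hε : 0 < ε)
    (K : Matrix (Fin m) (Fin n) ℝ)
    (hK : ∀ i j, K i j = Real.exp (-(C i j) / ε))
    (a : Fin m → ℝ) (ha : ∀ i, 0 < a i)
    (bd bu : Fin n → ℝ) (hbd : ∀ j, 0 ≤ bd j) (hdu : ∀ j, bd j ≤ bu j)
    (S : Set (Matrix (Fin m) (Fin n) ℝ))
    (hS : S = {P | (∀ i j, 0 ≤ P i j) ∧ (∀ i, ∑ j, P i j = a i) ∧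
            (∀ j, bd j ≤ ∑ i, P i j) ∧ (∀ j, ∑ i, P i j ≤ bu j)})
    (hne : S.Nonempty) :
    ∃ Pstar : Matrix (Fin m) (Fin n) ℝ,
      Pstar ∈ S ∧
      IsMinOn (fun P : Matrix (Fin m) (Fin n) ℝ =>
          (∑ i, ∑ j, C i j * P i j) -
            ε * (-(∑ i, ∑ j, P i j * (Real.log (P i j) - 1)))) S Pstar ∧
      (∀ P ∈ S,
        IsMinOn (fun P : Matrix (Fin m) (Fin n) ℝ =>
          (∑ i, ∑ j, C i j * P i j) -
            ε * (-(∑ i, ∑ j, P i j * (Real.log (P i j) - 1)))) S P → P = Pstar) ∧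
      ∃ (u : Fin m → ℝ) (q v : Fin n → ℝ),
        (∀ i, 0 < u i) ∧ (∀ j, 1 ≤ q j) ∧ (∀ j, 0 ≤ v j ∧ v j ≤ 1) ∧
        ∀ i j, Pstar i j = u i * K i j * (q j * v j) := by
  rw [ff_eq m n C ε]
  obtain ⟨Pstar, hPS, hmin⟩ := exists_min m n C ε a bd bu S hS hne
  refine ⟨Pstar, hPS, hmin,
    fun P hPmem hPmin => min_unique m n C ε hε a bd bu S hS P Pstar hPmem hPS hPmin hmin,
    ?_⟩
  obtain ⟨hnn, hrow, -, -⟩ : _ := hS ▸ hPS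
  have hKpos : ∀ i j, 0 < K i j := fun i j => by rw [hK]; exact Real.exp_pos _
  have colpos : ∀ (j : Fin n) (i i' : Fin m), 0 < Pstar i j → 0 < Pstar i' j :=
    fun j i i' h => min_col_pos m n C ε hε a ha bd bu S hS Pstar hPS hmin i' i j h
  set i0 : Fin m := ⟨0, hm⟩ with hi0
  obtain ⟨j0, hj0⟩ : ∃ j, 0 < Pstar i0 j := by
    by_contra hc; push_neg at hc
    have hz : ∑ j, Pstar i0 j = 0 := le_antisymm
      (Finset.sum_nonpos fun j _ => hc j) (Finset.sum_nonneg fun j _ => hnn i0 j)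
    rw [hrow i0] at hz; exact (ha i0).ne' hz
  set u : Fin m → ℝ := fun i => Pstar i j0 / K i j0 with hu
  set s : Fin n → ℝ := fun j => Pstar i0 j * K i0 j0 / (Pstar i0 j0 * K i0 j) with hs
  have hupos : ∀ i, 0 < u i := fun i => div_pos (colpos j0 i0 i hj0) (hKpos i j0)
  have hsnn : ∀ j, 0 ≤ s j := fun j => div_nonneg
    (mul_nonneg (hnn i0 j) (hKpos i0 j0).le) (mul_nonneg (hnn i0 j0) (hKpos i0 j).le)
  have hlogK' : ∀ i j, ε * Real.log (K i j) = -(C i j) := by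
    intro i j; rw [hK, Real.log_exp, mul_comm, div_mul_cancel₀ _ hε.ne']
  have hrep : ∀ i j, Pstar i j = u i * K i j * s j := by
    intro i j
    rcases eq_or_lt_of_le (hnn i0 j) with hz | hpos
    · have hz' : Pstar i0 j = 0 := hz.symm
      have hzij : Pstar i j = 0 := by
        by_contra hc
        have h' : 0 < Pstar i0 j := colpos j i i0 (lt_of_le_of_ne (hnn i j) (Ne.symm hc))
        rw [hz'] at h'; exact lt_irrefl _ h'
      have hsz : s j = 0 := by simp only [hs]; rw [hz']; simp
      rw [hzij, hsz, mul_zero]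
    · have pij : 0 < Pstar i j := colpos j i0 i hpos
      have pij0 : 0 < Pstar i j0 := colpos j0 i0 i hj0
      have p00 : 0 < Pstar i0 j0 := hj0
      have spos : 0 < s j := by
        simp only [hs]
        exact div_pos (mul_pos hpos (hKpos i0 j0)) (mul_pos p00 (hKpos i0 j))
      have heq := min_cycle m n C ε hε a bd bu S hS Pstar hPS hmin i i0 j j0
        pij pij0 hpos p00
      have nKij0 : K i j0 ≠ 0 := (hKpos i j0).ne'
      have nKij : K i j ≠ 0 := (hKpos i j).ne'
      have nKi0j0 : K i0 j0 ≠ 0 := (hKpos i0 j0).ne'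
      have nKi0j : K i0 j ≠ 0 := (hKpos i0 j).ne'
      have hexp : Real.log (u i * K i j * s j) =
          Real.log (Pstar i j0) - Real.log (K i j0) + Real.log (K i j) +
          (Real.log (Pstar i0 j) + Real.log (K i0 j0) -
           (Real.log (Pstar i0 j0) + Real.log (K i0 j))) := by
        simp only [hu, hs]
        rw [Real.log_mul (mul_ne_zero (div_ne_zero pij0.ne' nKij0) nKij)
              (div_ne_zero (mul_ne_zero hpos.ne' nKi0j0) (mul_ne_zero p00.ne' nKi0j)),
            Real.log_mul (div_ne_zero pij0.ne' nKij0) nKij,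
            Real.log_div pij0.ne' nKij0,
            Real.log_div (mul_ne_zero hpos.ne' nKi0j0) (mul_ne_zero p00.ne' nKi0j),
            Real.log_mul hpos.ne' nKi0j0,
            Real.log_mul p00.ne' nKi0j]
      have hεeq : ε * Real.log (Pstar i j) = ε * Real.log (u i * K i j * s j) := by
        rw [hexp]
        have e1 := hlogK' i j
        have e2 := hlogK' i j0
        have e3 := hlogK' i0 j
        have e4 := hlogK' i0 j0
        nlinarith [heq, e1, e2, e3, e4]
      have hlogeq : Real.log (Pstar i j) = Real.log (u i * K i j * s j) :=
        mul_left_cancel₀ hε.ne' hεeq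
      have hRpos : 0 < u i * K i j * s j := mul_pos (mul_pos (hupos i) (hKpos i j)) spos
      calc Pstar i j = Real.exp (Real.log (Pstar i j)) := (Real.exp_log pij).symm
        _ = Real.exp (Real.log (u i * K i j * s j)) := by rw [hlogeq]
        _ = _ := Real.exp_log hRpos
  refine ⟨u, fun j => max (s j) 1, fun j => min (s j) 1, hupos,
    fun j => le_max_right _ _,
    fun j => ⟨le_min (hsnn j) zero_le_one, min_le_right _ _⟩, fun i j => ?_⟩
  show Pstar i j = u i * K i j * (max (s j) 1 * min (s j) 1)
  rcases le_total (s j) 1 with h | h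
  · rw [max_eq_right h, min_eq_left h, one_mul]; exact hrep i j
  · rw [max_eq_left h, min_eq_right h, mul_one]; exact hrep i j
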